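/- (Global asymptotic stability of the optimal control law in continuous time) Consider the delay-differential equation ẋ(t) = −g(x(t−T)) where g(u) = min(u/T, 1) and T > 0. The function g is continuous, satisfies u·g(u) > 0 for all u ≠ 0 and α·u² > u·g(u) for any α > 1/T, and one may choose α ∈ (1/T, 3/(2T)) so that α·T < 3/2. Hence by Yorke's theorem on delay-differential equations, x(t) → 0 as t → ∞ for any initial condition. -/

import Mathlib

open Filter Set

lemma deriv_ub {x x' : ℝ → ℝ} (hx : ∀ t, HasDerivAt x (x' t) t) {a b K : ℝ}
    (hab : a ≤ b) (hK : ∀ s ∈ Icc a b, x' s ≤ K) : x b - x a ≤ K * (b - a) := by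
  have hd : ∀ s : ℝ, HasDerivAt (fun t => K * t - x t) (K - x' s) s := by
    intro s
    have h1 : HasDerivAt (fun t : ℝ => K * t) (K * 1) s := (hasDerivAt_id s).const_mul K
    exact (h1.sub (hx s)).congr_deriv (by ring)
  have hmono : MonotoneOn (fun t => K * t - x t) (Icc a b) := by
    apply monotoneOn_of_deriv_nonneg (convex_Icc a b)
    · exact (continuous_iff_continuousAt.2 fun t => (hd t).continuousAt).continuousOn
    · intro s _
      exact (hd s).differentiableAt.differentiableWithinAt
    · intro s hs
      rw [interior_Icc] at hs
      rw [(hd s).deriv]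
      have := hK s (Ioo_subset_Icc_self hs)
      linarith
  have := hmono (left_mem_Icc.2 hab) (right_mem_Icc.2 hab) hab
  simp only at this
  linarith

lemma deriv_lb {x x' : ℝ → ℝ} (hx : ∀ t, HasDerivAt x (x' t) t) {a b K : ℝ}
    (hab : a ≤ b) (hK : ∀ s ∈ Icc a b, K ≤ x' s) : K * (b - a) ≤ x b - x a := by
  have := deriv_ub (x := fun t => -x t) (x' := fun t => -(x' t))
    (fun t => (hx t).neg) hab (K := -K) (fun s hs => neg_le_neg (hK s hs))
  linarith

/-- Core excursion estimate: if `x ≥ c` after time `te`, `x z = 0` with `z ≥ te + 2T`,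
and `x ≥ 0` on `(z, t]`, then `x t ≤ -c/2`. -/
lemma excursion {T : ℝ} (hT : 0 < T) {f : ℝ → ℝ} (hfm : Monotone f)
    (hfneg : ∀ u, u ≤ 0 → u / T ≤ f u) (hfpos : ∀ u, 0 ≤ u → 0 ≤ f u)
    {x : ℝ → ℝ} (hx : ∀ t, HasDerivAt x (-(f (x (t - T)))) t)
    {c te z t : ℝ} (hc : c ≤ 0) (hlow : ∀ u, te ≤ u → c ≤ x u)
    (hz0 : x z = 0) (hzge : te + 2*T ≤ z)
    (hzt : z ≤ t) (hex : ∀ s, z < s → s ≤ t → 0 ≤ x s) :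
    x t ≤ -c/2 := by
  set K : ℝ := -c/T with hKdef
  have hK0 : 0 ≤ K := div_nonneg (by linarith) hT.le
  have hKT : K * T = -c := div_mul_cancel₀ _ hT.ne'
  -- pointwise derivative bound on [z, z+T]
  have Fs : ∀ s, z ≤ s → s ≤ z + T → -(f (x (s - T))) ≤ K * (z + T - s) / T := by
    intro s hs1 hs2
    have hstz : s - T ≤ z := by linarith
    have hxlow : -(K * (z + T - s)) ≤ x (s - T) := by
      have hub : x z - x (s - T) ≤ K * (z - (s - T)) := by
        apply deriv_ub hx hstz
        intro u hu
        have hu1 : te ≤ u - T := by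
          have := hu.1
          linarith
        have h1 : c ≤ x (u - T) := hlow _ hu1
        have h2 : f c ≤ f (x (u - T)) := hfm h1
        have h3 : c / T ≤ f c := hfneg c hc
        rw [hKdef, neg_div]
        linarith
      rw [hz0] at hub
      have : z - (s - T) = z + T - s := by ring
      rw [this] at hub
      linarith
    have harg : -(K * (z + T - s)) ≤ 0 := by
      have : 0 ≤ K * (z + T - s) := mul_nonneg hK0 (by linarith)
      linarith
    have h4 : -(K * (z + T - s)) / T ≤ f (-(K * (z + T - s))) := hfneg _ harg
    have h5 : f (-(K * (z + T - s))) ≤ f (x (s - T)) := hfm hxlow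
    have : -(K * (z + T - s)) / T ≤ f (x (s - T)) := le_trans h4 h5
    rw [neg_div] at this
    linarith
  -- sub-case: within one delay of the zero
  have sub1 : ∀ t', z ≤ t' → t' ≤ z + T → x t' ≤ -c/2 := by
    intro t' h1 h2
    have hΦ : ∀ s : ℝ, HasDerivAt (fun s => K * ((z+T)*s - s^2/2) / T) (K * (z + T - s) / T) s := by
      intro s
      have ha : HasDerivAt (fun s : ℝ => (z+T)*s - s^2/2) ((z+T) - s) s := by
        have h1 : HasDerivAt (fun s : ℝ => (z+T)*s) ((z+T) * 1) s := (hasDerivAt_id s).const_mul _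
        have h2 : HasDerivAt (fun s : ℝ => s^2/2) (2 * s^(2-1) / 2) s := (hasDerivAt_pow 2 s).div_const 2
        exact (h1.sub h2).congr_deriv (by norm_num)
      exact (ha.const_mul K).div_const T
    -- x t' - x z ≤ Φ t' - Φ z  via  (x - Φ)' ≤ 0
    have hG : ∀ s : ℝ, HasDerivAt (fun u => x u - K * ((z+T)*u - u^2/2) / T)
        (-(f (x (s - T))) - K * (z + T - s) / T) s := fun s => (hx s).sub (hΦ s)
    have hbnd : ∀ s ∈ Icc z t', -(f (x (s - T))) - K * (z + T - s) / T ≤ 0 := by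
      intro s hs
      have := Fs s hs.1 (le_trans hs.2 h2)
      linarith
    have hdec : x t' - K * ((z+T)*t' - t'^2/2) / T - (x z - K * ((z+T)*z - z^2/2) / T) ≤ 0 := by
      have := deriv_ub hG h1 (K := 0) hbnd
      linarith
    rw [hz0] at hdec
    have key : K*((z+T)*(t'-z) - (t'^2-z^2)/2) ≤ K*T*T/2 := by
      nlinarith [mul_nonneg hK0 (sq_nonneg (T - (t'-z)))]
    have hquad : K * ((z+T)*t' - t'^2/2) / T - K * ((z+T)*z - z^2/2) / T ≤ -c/2 := by
      have h6 : K * ((z+T)*t' - t'^2/2) / T - K * ((z+T)*z - z^2/2) / T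
          = K*((z+T)*(t'-z) - (t'^2-z^2)/2) / T := by ring
      rw [h6, div_le_iff₀ hT]
      nlinarith [key, hKT]
    linarith
  by_cases hcase : t ≤ z + T
  · exact sub1 t hzt hcase
  · push_neg at hcase
    have h1 : x (z + T) ≤ -c/2 := sub1 (z+T) (by linarith) le_rfl
    have hbnd2 : ∀ s ∈ Icc (z+T) t, -(f (x (s - T))) ≤ 0 := by
      intro s hs
      have hxs : 0 ≤ x (s - T) := by
        rcases eq_or_lt_of_le (show z ≤ s - T by linarith [hs.1]) with h | h
        · rw [← h, hz0]
        · exact hex _ h (by linarith [hs.2])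
      have := hfpos _ hxs
      linarith
    have h2 : x t - x (z + T) ≤ 0 := by
      have := deriv_ub hx (a := z + T) (b := t) hcase.le (K := 0) hbnd2
      linarith
    linarith

/-- Last zero before `t`: if `x Z = 0`, `x t > 0`, there is `z ∈ [Z, t)` with `x z = 0`
and `x > 0` on `(z, t]`. -/
lemma lastZero {x : ℝ → ℝ} (hc : Continuous x) {Z t : ℝ} (hZt : Z ≤ t)
    (hZ : x Z = 0) (hxt : 0 < x t) :
    ∃ z, Z ≤ z ∧ z < t ∧ x z = 0 ∧ ∀ s, z < s → s ≤ t → 0 < x s := by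
  set S : Set ℝ := {s | s ∈ Icc Z t ∧ x s ≤ 0} with hS
  have hScpt : IsCompact S :=
    isCompact_Icc.of_isClosed_subset (isClosed_Icc.inter (isClosed_le hc continuous_const))
      (fun s hs => hs.1)
  have hSne : S.Nonempty := ⟨Z, ⟨le_rfl, hZt⟩, le_of_eq hZ⟩
  set z := sSup S with hz
  have hzmem : z ∈ S := hScpt.sSup_mem hSne
  have hzIcc : z ∈ Icc Z t := hzmem.1
  have hxz : x z ≤ 0 := hzmem.2
  have hpos : ∀ s, z < s → s ≤ t → 0 < x s := by
    intro s h1 h2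
    by_contra hle
    push_neg at hle
    have : s ∈ S := ⟨⟨le_trans hzIcc.1 h1.le, h2⟩, hle⟩
    have : s ≤ z := le_csSup hScpt.bddAbove this
    linarith
  have hzt : z < t := by
    rcases lt_or_eq_of_le hzIcc.2 with h | h
    · exact h
    · rw [h] at hxz; linarith
  have hz0 : x z = 0 := by
    refine le_antisymm hxz ?_
    have htd : Tendsto x (nhdsWithin z (Ioi z)) (nhds (x z)) :=
      (hc.tendsto z).mono_left nhdsWithin_le_nhds
    refine ge_of_tendsto htd ?_
    filter_upwards [Ioc_mem_nhdsGT_of_mem (⟨le_rfl, hzt⟩ : z ∈ Ico z t)] with s hs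
    exact (hpos s hs.1 hs.2).le
  exact ⟨z, hzIcc.1, hzt, hz0, hpos⟩

/-- If `x ≥ c` eventually (from `te`), and `x Z = 0` with `Z ≥ te + 2T`, then
`x t ≤ -c/2` for all `t ≥ Z`. -/
lemma ev_bound {T : ℝ} (hT : 0 < T) {f : ℝ → ℝ} (hfm : Monotone f)
    (hfneg : ∀ u, u ≤ 0 → u / T ≤ f u) (hfpos : ∀ u, 0 ≤ u → 0 ≤ f u)
    {x : ℝ → ℝ} (hx : ∀ t, HasDerivAt x (-(f (x (t - T)))) t)
    {c te Z : ℝ} (hc : c ≤ 0) (hlow : ∀ u, te ≤ u → c ≤ x u)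
    (hZ : x Z = 0) (hZge : te + 2*T ≤ Z) :
    ∀ t, Z ≤ t → x t ≤ -c/2 := by
  have hcont : Continuous x := continuous_iff_continuousAt.2 fun s => (hx s).continuousAt
  intro t ht
  by_cases hxt : x t ≤ 0
  · linarith
  · push_neg at hxt
    obtain ⟨z, hz1, hz2, hz0, hzpos⟩ := lastZero hcont ht hZ hxt
    exact excursion hT hfm hfneg hfpos hx hc hlow hz0 (by linarith) hz2.le
      (fun s h1 h2 => (hzpos s h1 h2).le)

/-- Crude lower bound `x ≥ -T` after a zero, given the derivative is `≥ -1` after `s₁`. -/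
lemma crude_ge {T : ℝ} (hT : 0 < T) {f : ℝ → ℝ}
    (hfneg' : ∀ u, u ≤ 0 → f u ≤ 0)
    {x : ℝ → ℝ} (hx : ∀ t, HasDerivAt x (-(f (x (t - T)))) t)
    {s₁ Z : ℝ} (hder : ∀ s, s₁ ≤ s → f (x (s - T)) ≤ 1)
    (hZ : x Z = 0) (hZs : s₁ ≤ Z) :
    ∀ t, Z ≤ t → -T ≤ x t := by
  have hcont : Continuous x := continuous_iff_continuousAt.2 fun s => (hx s).continuousAt
  intro t ht
  by_cases h0 : -T ≤ x t
  · exact h0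
  · push_neg at h0
    have hyt : 0 < -x t := by linarith
    obtain ⟨z, hz1, hz2, hz0, hzpos⟩ := lastZero (x := fun s => -x s) hcont.neg ht
      (by simpa using hZ) hyt
    simp only [neg_eq_zero] at hz0
    have hxneg : ∀ s, z < s → s ≤ t → x s < 0 := by
      intro s h1 h2
      have := hzpos s h1 h2
      simpa using this
    have sub1 : ∀ t', z ≤ t' → t' ≤ z + T → -T ≤ x t' := by
      intro t' h1 h2
      have hbnd : ∀ s ∈ Icc z t', (-1 : ℝ) ≤ -(f (x (s - T))) := by
        intro s hs
        have := hder s (by linarith [hs.1])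
        linarith
      have := deriv_lb hx h1 hbnd
      rw [hz0] at this
      nlinarith
    by_cases hcase : t ≤ z + T
    · exact sub1 t hz2.le hcase
    · push_neg at hcase
      have hbnd2 : ∀ s ∈ Icc (z+T) t, (0:ℝ) ≤ -(f (x (s - T))) := by
        intro s hs
        have hxs : x (s - T) ≤ 0 := by
          rcases eq_or_lt_of_le (show z ≤ s - T by linarith [hs.1]) with h | h
          · rw [← h, hz0]
          · exact (hxneg _ h (by linarith [hs.2])).le
        have := hfneg' _ hxs
        linarith
      have h2 := deriv_lb hx (a := z+T) (b := t) hcase.le hbnd2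
      have h1 := sub1 (z+T) (by linarith) le_rfl
      nlinarith

/-- If `x` stays positive from `t₀` on, then `x → 0`. -/
lemma pos_tendsto {T : ℝ} (hT : 0 < T) {f : ℝ → ℝ} (hfm : Monotone f)
    (hfsgn : ∀ u, 0 < u → 0 < f u)
    {x : ℝ → ℝ} (hx : ∀ t, HasDerivAt x (-(f (x (t - T)))) t)
    {t₀ : ℝ} (hpos : ∀ t, t₀ ≤ t → 0 < x t) : Tendsto x atTop (nhds 0) := by
  have hdecr : ∀ a b, t₀ + T ≤ a → a ≤ b → x b ≤ x a := by
    intro a b ha hab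
    have hbnd : ∀ s ∈ Icc a b, -(f (x (s - T))) ≤ 0 := by
      intro s hs
      have h1 : 0 < x (s - T) := hpos _ (by linarith [hs.1])
      have := hfsgn _ h1
      linarith
    have := deriv_ub hx hab hbnd
    nlinarith
  have hub : ∀ᶠ t in atTop, x t ≤ x (t₀ + T) := by
    filter_upwards [eventually_ge_atTop (t₀ + T)] with t ht
    exact hdecr _ _ le_rfl ht
  have hlb : ∀ᶠ t in atTop, (0:ℝ) ≤ x t := by
    filter_upwards [eventually_ge_atTop t₀] with t ht
    exact (hpos t ht).le
  have hb1 : IsBoundedUnder (· ≤ ·) atTop x := ⟨_, hub⟩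
  have hb2 : IsBoundedUnder (· ≥ ·) atTop x := ⟨_, hlb⟩
  have hL0 : 0 ≤ liminf x atTop := le_liminf_of_le hb1.isCoboundedUnder_ge hlb
  have hLle : liminf x atTop ≤ 0 := by
    by_contra hL
    push_neg at hL
    have hev : ∀ᶠ t in atTop, liminf x atTop / 2 < x t :=
      eventually_lt_of_lt_liminf (by linarith) hb2
    rw [eventually_atTop] at hev
    obtain ⟨t₁, ht₁⟩ := hev
    set c := f (liminf x atTop / 2) with hcdef
    have hcpos : 0 < c := hfsgn _ (by linarith)
    set a := max t₁ t₀ + T with hadef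
    have hat₀ : t₀ ≤ a := by
      have := le_max_right t₁ t₀
      linarith
    have hxa : 0 < x a := hpos _ hat₀
    obtain ⟨b, hbdef⟩ : ∃ b, b = a + x a / c + 1 := ⟨_, rfl⟩
    have hab : a ≤ b := by
      have : 0 ≤ x a / c := le_of_lt (div_pos hxa hcpos)
      linarith
    have hbnd : ∀ s ∈ Icc a b, -(f (x (s - T))) ≤ -c := by
      intro s hs
      have h1 : liminf x atTop / 2 < x (s - T) := by
        apply ht₁
        have := le_max_left t₁ t₀
        have := hs.1
        linarith
      have := hfm h1.le
      rw [← hcdef] at this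
      linarith
    have hkey := deriv_ub hx hab hbnd
    have hxb : x b ≤ -c := by
      have : -c * (b - a) = -(x a) - c := by
        rw [hbdef]
        field_simp
        ring
      rw [this] at hkey
      linarith
    have := hpos b (by linarith)
    linarith
  have hL : liminf x atTop = 0 := le_antisymm hLle hL0
  have hMle : limsup x atTop ≤ 0 := by
    apply le_of_forall_pos_le_add
    intro ε hε
    have hfreq : ∃ᶠ t in atTop, x t < ε :=
      frequently_lt_of_liminf_lt hb1.isCoboundedUnder_ge (by rw [hL]; exact hε)
    obtain ⟨s₁, hs₁⟩ := (hfreq.and_eventually (eventually_ge_atTop (t₀ + T))).exists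
    have hev : ∀ᶠ t in atTop, x t ≤ ε := by
      filter_upwards [eventually_ge_atTop s₁] with t ht
      exact le_trans (hdecr _ _ hs₁.2 ht) hs₁.1.le
    have := limsup_le_of_le hb2.isCoboundedUnder_le hev
    linarith
  have hM0 : 0 ≤ limsup x atTop := hL ▸ liminf_le_limsup hb1 hb2
  exact tendsto_of_liminf_eq_limsup hL (le_antisymm hMle hM0) hb1 hb2

/-- Global asymptotic stability in continuous time: for
`g(u) = min(u/T, 1)` with `T > 0`, the function `g` is continuous, satisfies the
sector condition `0 < u·g(u) < α·u²` for all `u ≠ 0` whenever `α > 1/T`, and one may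
choose `α ∈ (1/T, 3/(2T))` so that `α·T < 3/2`; hence (Yorke) every solution of the
delay-differential equation `ẋ(t) = −g(x(t−T))` tends to `0` as `t → ∞`. -/
theorem stmt_15 (T : ℝ) (hT : 0 < T) (g : ℝ → ℝ)
    (hg : ∀ u, g u = min (u / T) 1) :
    Continuous g
    ∧ (∀ u : ℝ, u ≠ 0 → 0 < u * g u)
    ∧ (∀ α : ℝ, 1 / T < α → ∀ u : ℝ, u ≠ 0 → u * g u < α * u ^ 2)
    ∧ (∃ α : ℝ, 1 / T < α ∧ α < 3 / (2 * T) ∧ α * T < 3 / 2)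
    ∧ (∀ x : ℝ → ℝ, (∀ t : ℝ, HasDerivAt x (-g (x (t - T))) t) →
        Tendsto x atTop (nhds 0)) := by
  -- basic facts about g
  have hgm : Monotone g := by
    intro a b hab
    rw [hg, hg]
    exact min_le_min (div_le_div_of_nonneg_right hab hT.le) le_rfl
  have hgneg : ∀ u, u ≤ 0 → u / T ≤ g u := by
    intro u hu
    rw [hg]
    exact le_min le_rfl (by nlinarith [div_nonpos_of_nonpos_of_nonneg hu hT.le])
  have hgpos : ∀ u, 0 ≤ u → 0 ≤ g u := by
    intro u hu
    rw [hg]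
    exact le_min (div_nonneg hu hT.le) one_pos.le
  have hgsgn : ∀ u, 0 < u → 0 < g u := by
    intro u hu
    rw [hg]
    exact lt_min (div_pos hu hT) one_pos
  have hgle1 : ∀ u, g u ≤ 1 := by intro u; rw [hg]; exact min_le_right _ _
  have hgneg' : ∀ u, u ≤ 0 → g u ≤ 0 := by
    intro u hu
    rw [hg]
    exact le_trans (min_le_left _ _) (div_nonpos_of_nonpos_of_nonneg hu hT.le)
  have hgleu : ∀ u, g u ≤ u / T := by intro u; rw [hg]; exact min_le_left _ _
  -- the mirrored nonlinearity
  have hhm : Monotone (fun v : ℝ => max (v / T) (-1)) := by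
    intro a b hab
    exact max_le_max (div_le_div_of_nonneg_right hab hT.le) le_rfl
  have hhneg : ∀ v : ℝ, v ≤ 0 → v / T ≤ max (v / T) (-1 : ℝ) := fun v _ => le_max_left _ _
  have hhpos : ∀ v : ℝ, 0 ≤ v → 0 ≤ max (v / T) (-1 : ℝ) :=
    fun v hv => le_trans (div_nonneg hv hT.le) (le_max_left _ _)
  have hhsgn : ∀ v : ℝ, 0 < v → 0 < max (v / T) (-1 : ℝ) :=
    fun v hv => lt_of_lt_of_le (div_pos hv hT) (le_max_left _ _)
  have hhneg'' : ∀ v : ℝ, v ≤ 0 → max (v / T) (-1 : ℝ) ≤ 0 :=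
    fun v hv => max_le (div_nonpos_of_nonpos_of_nonneg hv hT.le) (by norm_num)
  have hgh : ∀ u : ℝ, g u = -(max (-u / T) (-1 : ℝ)) := by
    intro u
    rcases le_total (u / T) (1 : ℝ) with h | h
    · rw [hg u, min_eq_left h, neg_div, max_eq_left (neg_le_neg h)]
      ring
    · rw [hg u, min_eq_right h, neg_div, max_eq_right (neg_le_neg h)]
      norm_num
  refine ⟨?_, ?_, ?_, ?_, ?_⟩
  · have : g = fun u => min (u / T) 1 := funext hg
    rw [this]
    exact (continuous_id.div_const T).min continuous_const
  · intro u hu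
    rcases hu.lt_or_gt with h | h
    · have h1 : g u ≤ u / T := hgleu u
      have h2 : u / T < 0 := div_neg_of_neg_of_pos h hT
      nlinarith
    · nlinarith [hgsgn u h]
  · intro α hα u hu
    rw [div_lt_iff₀ hT] at hα
    have hu2 : (0:ℝ) < u ^ 2 := by positivity
    have hmain : u * g u ≤ u ^ 2 / T := by
      rcases hu.lt_or_gt with h | h
      · have key : 0 ≤ (-u) * (g u - u / T) :=
          mul_nonneg (neg_nonneg.2 h.le) (sub_nonneg.2 (hgneg u h.le))
        have he : (-u) * (g u - u / T) = -(u * g u) + u ^ 2 / T := by field_simp; ring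
        linarith [he ▸ key]
      · have key : 0 ≤ u * (u / T - g u) :=
          mul_nonneg h.le (sub_nonneg.2 (hgleu u))
        have he : u * (u / T - g u) = u ^ 2 / T - u * g u := by field_simp
        linarith [he ▸ key]
    have h4 : u ^ 2 / T < α * u ^ 2 := by
      rw [div_lt_iff₀ hT]
      nlinarith [mul_pos (show (0:ℝ) < α * T - 1 by linarith) hu2]
    linarith
  · refine ⟨5 / (4 * T), ?_, ?_, ?_⟩
    · rw [div_lt_div_iff₀ hT (by linarith)]
      nlinarith
    · rw [div_lt_div_iff₀ (by linarith) (by linarith)]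
      nlinarith
    · rw [div_mul_eq_mul_div, div_lt_iff₀ (by linarith)]
      nlinarith
  · intro x hx
    have hcont : Continuous x := continuous_iff_continuousAt.2 fun s => (hx s).continuousAt
    have hx' : ∀ t, HasDerivAt x (-(g (x (t - T)))) t := hx
    have hy : ∀ t, HasDerivAt (fun s => -x s) (-(max (-x (t - T) / T) (-1 : ℝ))) t := by
      intro t
      have h1 := (hx t).neg
      rw [neg_neg, hgh] at h1
      exact h1
    by_cases hzero : ∀ t₀ : ℝ, ∃ t, t₀ ≤ t ∧ x t = 0
    · -- oscillatory case
      obtain ⟨z₀, _, hz₀⟩ := hzero 0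
      have hlbx : ∀ t, z₀ ≤ t → -T ≤ x t :=
        crude_ge hT hgneg' hx' (s₁ := z₀) (fun s _ => hgle1 _) hz₀ le_rfl
      obtain ⟨Z₁, hZ₁ge, hZ₁⟩ := hzero (z₀ + 2 * T)
      have hZ₁y : -x Z₁ = 0 := by rw [hZ₁]; ring
      have hubx : ∀ t, Z₁ ≤ t → x t ≤ T := by
        have hder : ∀ s, z₀ + T ≤ s → max (-x (s - T) / T) (-1 : ℝ) ≤ 1 := by
          intro s hs
          apply max_le _ (by norm_num)
          rw [div_le_one hT]
          have := hlbx (s - T) (by linarith)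
          linarith
        have hc := crude_ge hT (f := fun v : ℝ => max (v / T) (-1)) hhneg''
          (x := fun s => -x s) hy (s₁ := z₀ + T) hder hZ₁y (by linarith)
        intro t ht
        have := hc t ht
        linarith
      have hb1 : IsBoundedUnder (· ≤ ·) atTop x := by
        refine ⟨T, eventually_map.2 ?_⟩
        filter_upwards [eventually_ge_atTop Z₁] with t ht
        exact hubx t ht
      have hb2 : IsBoundedUnder (· ≥ ·) atTop x := by
        refine ⟨-T, eventually_map.2 ?_⟩
        filter_upwards [eventually_ge_atTop (max z₀ Z₁)] with t ht
        exact hlbx t (le_trans (le_max_left _ _) ht)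
      have hm0 : liminf x atTop ≤ 0 := by
        by_contra hlt
        push_neg at hlt
        have hev := eventually_lt_of_lt_liminf hlt hb2
        rw [eventually_atTop] at hev
        obtain ⟨t₂, ht₂⟩ := hev
        obtain ⟨z, hzge, hz⟩ := hzero t₂
        have := ht₂ z hzge
        rw [hz] at this
        exact lt_irrefl 0 this
      have hM0 : 0 ≤ limsup x atTop := by
        by_contra hlt
        push_neg at hlt
        have hev := eventually_lt_of_limsup_lt hlt hb1
        rw [eventually_atTop] at hev
        obtain ⟨t₂, ht₂⟩ := hev
        obtain ⟨z, hzge, hz⟩ := hzero t₂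
        have := ht₂ z hzge
        rw [hz] at this
        exact lt_irrefl 0 this
      have Key1 : ∀ ε : ℝ, 0 < ε → limsup x atTop ≤ (ε - liminf x atTop) / 2 := by
        intro ε hε
        have hc : liminf x atTop - ε ≤ 0 := by linarith
        have hev := eventually_lt_of_lt_liminf (show liminf x atTop - ε < liminf x atTop by linarith) hb2
        rw [eventually_atTop] at hev
        obtain ⟨te, hte⟩ := hev
        obtain ⟨Z, hZge, hZ0⟩ := hzero (te + 2 * T)
        have hbd := ev_bound hT hgm hgneg hgpos hx' hc (fun u hu => (hte u hu).le) hZ0 hZge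
        have hev2 : ∀ᶠ t in atTop, x t ≤ -(liminf x atTop - ε) / 2 := by
          filter_upwards [eventually_ge_atTop Z] with t ht
          exact hbd t ht
        have := limsup_le_of_le hb2.isCoboundedUnder_le hev2
        linarith
      have Key2 : ∀ ε : ℝ, 0 < ε → -(limsup x atTop + ε) / 2 ≤ liminf x atTop := by
        intro ε hε
        have hc : -(limsup x atTop + ε) ≤ 0 := by linarith
        have hev := eventually_lt_of_limsup_lt (show limsup x atTop < limsup x atTop + ε by linarith) hb1
        rw [eventually_atTop] at hev
        obtain ⟨te, hte⟩ := hev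
        obtain ⟨Z, hZge, hZ0⟩ := hzero (te + 2 * T)
        have hZy : -x Z = 0 := by rw [hZ0]; ring
        have hlowy : ∀ u, te ≤ u → -(limsup x atTop + ε) ≤ -x u := by
          intro u hu
          have := hte u hu
          linarith
        have hbd := ev_bound hT (f := fun v : ℝ => max (v / T) (-1)) hhm hhneg hhpos
          (x := fun s => -x s) hy hc hlowy hZy hZge
        have hev2 : ∀ᶠ t in atTop, -(limsup x atTop + ε) / 2 ≤ x t := by
          filter_upwards [eventually_ge_atTop Z] with t ht
          have := hbd t ht
          linarith
        exact le_liminf_of_le hb1.isCoboundedUnder_ge hev2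
      have hMm : limsup x atTop ≤ -(liminf x atTop) / 2 := by
        apply le_of_forall_pos_le_add
        intro ε hε
        have := Key1 (2 * ε) (by linarith)
        linarith
      have hmM : -(limsup x atTop) / 2 ≤ liminf x atTop := by
        have h' : ∀ ε : ℝ, 0 < ε → -(limsup x atTop) / 2 ≤ liminf x atTop + ε := by
          intro ε hε
          have := Key2 (2 * ε) (by linarith)
          linarith
        exact le_of_forall_pos_le_add h'
      have hM : limsup x atTop = 0 := by
        have : limsup x atTop ≤ 0 := by linarith
        linarith [hM0, this]
      have hm : liminf x atTop = 0 := by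
        rw [hM] at hmM
        have : (0:ℝ) ≤ liminf x atTop := by linarith
        linarith [hm0]
      exact tendsto_of_liminf_eq_limsup hm hM hb1 hb2
    · -- eventually sign-definite case
      push_neg at hzero
      obtain ⟨t₀, ht₀⟩ := hzero
      rcases (ht₀ t₀ le_rfl).lt_or_gt with hneg | hpos
      · -- eventually negative
        have hposall : ∀ t, t₀ ≤ t → 0 < -x t := by
          intro t ht
          rcases (ht₀ t ht).lt_or_gt with h | h
          · linarith
          · exfalso
            have h0 : (0:ℝ) ∈ Icc (x t₀) (x t) := ⟨hneg.le, h.le⟩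
            obtain ⟨s, hsmem, hs0⟩ := intermediate_value_Icc ht hcont.continuousOn h0
            exact ht₀ s hsmem.1 hs0
        have htd := pos_tendsto hT hhm hhsgn hy hposall
        have := htd.neg
        simp only [neg_neg, neg_zero] at this
        exact this
      · -- eventually positive
        have hposall : ∀ t, t₀ ≤ t → 0 < x t := by
          intro t ht
          rcases (ht₀ t ht).lt_or_gt with h | h
          · exfalso
            have h0 : (0:ℝ) ∈ Icc (x t) (x t₀) := ⟨h.le, hpos.le⟩
            obtain ⟨s, hsmem, hs0⟩ := intermediate_value_Icc' ht hcont.continuousOn h0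
            exact ht₀ s hsmem.1 hs0
          · exact h
        exact pos_tendsto hT hgm hgsgn hx' hposall
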